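/- For any two distinct elements γ, ξ of Γ, one has ∏_{k=1}^∞ cos(2π(γ−ξ)/4^k) = 0; hence the exponentials e_γ(x) = e^{2πiγx} and e_ξ(x) = e^{2πiξx} are orthogonal in L²(μ). -/

import Mathlib

open MeasureTheory Real

def GammaSet : Set ℕ := {n | ∀ d ∈ Nat.digits 4 n, d ≤ 1}

lemma gamma_digit_le {n : ℕ} (hn : n ∈ GammaSet) : ∀ m, n / 4 ^ m % 4 ≤ 1 := by
  induction n using Nat.strong_induction_on with
  | _ n IH =>
    intro m
    rcases Nat.eq_zero_or_pos n with h0 | h0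
    · simp [h0]
    have hdig : Nat.digits 4 n = n % 4 :: Nat.digits 4 (n / 4) :=
      Nat.digits_def' (by norm_num) h0
    cases m with
    | zero =>
      have := hn (n % 4) (by rw [hdig]; exact List.mem_cons_self)
      simpa using this
    | succ m =>
      have hmem : n / 4 ∈ GammaSet := by
        intro d hd
        exact hn d (by rw [hdig]; exact List.mem_cons_of_mem _ hd)
      have := IH (n / 4) (Nat.div_lt_self h0 (by norm_num)) hmem m
      rw [pow_succ']
      rwa [Nat.div_div_eq_div_mul] at this

lemma eq_of_dig (N : ℕ) : ∀ a b : ℕ, a + b ≤ N →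
    (∀ m, a / 4 ^ m % 4 = b / 4 ^ m % 4) → a = b := by
  induction N with
  | zero => intro a b h _; omega
  | succ N IH =>
    intro a b hab h
    rcases Nat.eq_zero_or_pos (a + b) with h0 | h0
    · omega
    have h0' := h 0
    simp at h0'
    have hstep : ∀ m, a / 4 / 4 ^ m % 4 = b / 4 / 4 ^ m % 4 := by
      intro m
      have := h (m + 1)
      rwa [pow_succ', Nat.div_div_eq_div_mul, Nat.div_div_eq_div_mul] at *
    have hle : a / 4 + b / 4 ≤ N := by omega
    have := IH (a / 4) (b / 4) hle hstep
    omega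

lemma mod_pow_eq : ∀ m a b : ℕ, (∀ j < m, a / 4 ^ j % 4 = b / 4 ^ j % 4) →
    a % 4 ^ m = b % 4 ^ m := by
  intro m
  induction m with
  | zero => intro a b _; omega
  | succ m IH =>
    intro a b h
    have h1 := IH a b (fun j hj => h j (Nat.lt_succ_of_lt hj))
    have h2 := h m (Nat.lt_succ_self m)
    have key : ∀ c : ℕ, c % 4 ^ (m + 1) = c % 4 ^ m + 4 ^ m * (c / 4 ^ m % 4) := by
      intro c
      rw [pow_succ, Nat.mod_mul]
    rw [key a, key b, h1, h2]

-- key analytic lemma: some cosine factor vanishes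
lemma exists_cos_zero {γ ξ : ℕ} (hγ : γ ∈ GammaSet) (hξ : ξ ∈ GammaSet) (hne : γ ≠ ξ) :
    ∃ m : ℕ, Real.cos (2 * π * ((γ : ℝ) - ξ) / 4 ^ (m + 1)) = 0 := by
  have hex : ∃ m, γ / 4 ^ m % 4 ≠ ξ / 4 ^ m % 4 := by
    by_contra hc
    push_neg at hc
    exact hne (eq_of_dig (γ + ξ) γ ξ le_rfl hc)
  classical
  obtain ⟨m, hdiff, hmin⟩ : ∃ m, (γ / 4 ^ m % 4 ≠ ξ / 4 ^ m % 4) ∧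
      ∀ j < m, γ / 4 ^ j % 4 = ξ / 4 ^ j % 4 :=
    ⟨Nat.find hex, Nat.find_spec hex, fun j hj => not_not.mp (Nat.find_min hex hj)⟩
  have hmod : γ % 4 ^ m = ξ % 4 ^ m := mod_pow_eq m γ ξ hmin
  -- work in ℤ
  set u : ℤ := (γ : ℤ) / 4 ^ m - (ξ : ℤ) / 4 ^ m with hu
  have hγsplit : (γ : ℤ) = 4 ^ m * ((γ : ℤ) / 4 ^ m) + (γ : ℤ) % 4 ^ m := (Int.mul_ediv_add_emod _ _).symm
  have hξsplit : (ξ : ℤ) = 4 ^ m * ((ξ : ℤ) / 4 ^ m) + (ξ : ℤ) % 4 ^ m := (Int.mul_ediv_add_emod _ _).symm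
  have hmodZ : (γ : ℤ) % 4 ^ m = (ξ : ℤ) % 4 ^ m := by
    have h := congrArg (Nat.cast : ℕ → ℤ) hmod
    push_cast at h
    exact h
  have hsub : (γ : ℤ) - ξ = 4 ^ m * u := by
    rw [hu]; linear_combination hγsplit - hξsplit + hmodZ
  -- digits at position m
  have hdγ : (γ : ℤ) / 4 ^ m % 4 = (γ / 4 ^ m % 4 : ℕ) := by
    push_cast
    rfl
  have hdξ : (ξ : ℤ) / 4 ^ m % 4 = (ξ / 4 ^ m % 4 : ℕ) := by
    push_cast
    rfl
  have haγ := gamma_digit_le hγ m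
  have haξ := gamma_digit_le hξ m
  -- u % 4 = 1 or 3
  have humod : u % 4 = 1 ∨ u % 4 = 3 := by
    have h4 : ((γ : ℤ) / 4 ^ m - (ξ : ℤ) / 4 ^ m) % 4 = ((γ : ℤ) / 4 ^ m % 4 - (ξ : ℤ) / 4 ^ m % 4) % 4 := by
      omega
    rw [hu, h4, hdγ, hdξ]
    interval_cases h : γ / 4 ^ m % 4 <;> interval_cases h' : ξ / 4 ^ m % 4 <;> omega
  -- now compute cosine
  use m
  obtain ⟨q, r, hr, huq⟩ : ∃ q r : ℤ, (r = 1 ∨ r = 3) ∧ u = 4 * q + r := by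
    refine ⟨u / 4, u % 4, humod, by omega⟩
  have hval : 2 * π * ((γ : ℝ) - ξ) / 4 ^ (m + 1) = (r : ℝ) * π / 2 + q * (2 * π) := by
    have hsubR : (γ : ℝ) - ξ = 4 ^ m * ((4 * q + r : ℤ) : ℝ) := by
      have := hsub
      rw [huq] at this
      have : ((γ : ℤ) : ℝ) - ((ξ : ℤ) : ℝ) = ((4 ^ m * (4 * q + r) : ℤ) : ℝ) := by
        exact_mod_cast congrArg (Int.cast : ℤ → ℝ) this
      push_cast at this ⊢
      linarith
    rw [hsubR]
    have h4 : (4 : ℝ) ^ (m + 1) = 4 ^ m * 4 := by ring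
    rw [h4]
    push_cast
    field_simp
    ring
  rw [hval, Real.cos_add_int_mul_two_pi]
  rcases hr with h | h
  · rw [h]; push_cast; norm_num [Real.cos_pi_div_two]
  · rw [h]; push_cast
    rw [show (3 : ℝ) * π / 2 = π + π / 2 by ring]; simp [Real.cos_add]
lemma hasProd_zero_of_eq_zero {M : Type*} [CommMonoidWithZero M] [TopologicalSpace M]
    (f : ℕ → M) (m : ℕ) (h : f m = 0) : HasProd f 0 := by
  have he : (fun s : Finset ℕ => ∏ i ∈ s, f i) =ᶠ[Filter.atTop] fun _ => 0 := by
    filter_upwards [Filter.eventually_ge_atTop ({m} : Finset ℕ)] with s hs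
    exact Finset.prod_eq_zero (hs (Finset.mem_singleton_self m)) h
  exact Filter.Tendsto.congr' he.symm tendsto_const_nhds

theorem gamma_exponentials_orthogonal
    (μ : Measure ℝ) [IsProbabilityMeasure μ]
    (hfour : ∀ t : ℝ, ∫ x, Complex.exp (2 * π * Complex.I * t * x) ∂μ =
      ∏' k : ℕ, (Real.cos (2 * π * t / 4 ^ (k + 1)) : ℂ))
    {γ ξ : ℕ} (hγ : γ ∈ GammaSet) (hξ : ξ ∈ GammaSet) (hne : γ ≠ ξ) :
    (∏' k : ℕ, Real.cos (2 * π * ((γ : ℝ) - ξ) / 4 ^ (k + 1))) = 0 ∧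
    ∫ x, Complex.exp (2 * π * Complex.I * γ * x) *
        (starRingEnd ℂ) (Complex.exp (2 * π * Complex.I * ξ * x)) ∂μ = 0 := by
  obtain ⟨m, hm0⟩ := exists_cos_zero hγ hξ hne
  have h1 : (∏' k : ℕ, Real.cos (2 * π * ((γ : ℝ) - ξ) / 4 ^ (k + 1))) = 0 :=
    (hasProd_zero_of_eq_zero _ m hm0).tprod_eq
  have h1c : (∏' k : ℕ, (Real.cos (2 * π * ((γ : ℝ) - ξ) / 4 ^ (k + 1)) : ℂ)) = 0 :=
    (hasProd_zero_of_eq_zero _ m (by rw [hm0]; norm_num)).tprod_eq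
  refine ⟨h1, ?_⟩
  have hint : ∀ x : ℝ, Complex.exp (2 * π * Complex.I * γ * x) *
      (starRingEnd ℂ) (Complex.exp (2 * π * Complex.I * ξ * x)) =
      Complex.exp (2 * π * Complex.I * (((γ : ℝ) - ξ : ℝ) : ℂ) * x) := by
    intro x
    rw [← Complex.exp_conj, ← Complex.exp_add]
    congr 1
    simp only [map_mul, Complex.conj_I, Complex.conj_ofReal, map_ofNat, map_natCast]
    push_cast
    ring
  calc ∫ x, Complex.exp (2 * π * Complex.I * γ * x) *
        (starRingEnd ℂ) (Complex.exp (2 * π * Complex.I * ξ * x)) ∂μ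
      = ∫ x, Complex.exp (2 * π * Complex.I * (((γ : ℝ) - ξ : ℝ) : ℂ) * x) ∂μ := by
        simp_rw [hint]
    _ = ∏' k : ℕ, (Real.cos (2 * π * ((γ : ℝ) - ξ) / 4 ^ (k + 1)) : ℂ) := hfour _
    _ = 0 := h1c
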